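/- Let {g_{αβ}} be a GL(n)-valued Čech cocycle for an ordered cover 𝒰 of X (g_{αγ} = g_{αβ}g_{βγ} on triple intersections). Then the Čech–de Rham cochain c̃₂ = {Tr(g_{αβ}⁻¹dg_{αβ} ∧ g_{αβ}⁻¹dg_{αβ} ∧ g_{αβ}⁻¹dg_{αβ})}_{α≺β} − 3{Tr(g_{αβ}⁻¹dg_{αβ} ∧ dg_{βγ}g_{βγ}⁻¹)}_{α≺β≺γ} is closed for the total differential d + δ on Č(𝒰, Ω_{DR}(U)). -/
import Mathlib


/-!
STATEMENT 16.  `{g_{αβ}}` a GL(n)-valued Čech cocycle for an ordered cover,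
realized as matrices with entries in the (graded-commutative) DG algebra Ω of
forms (entries of degree 0, i.e. fixed by the sign operator `sΩ`).  The
Čech–de Rham cochain
`c̃₂ = {Tr((g⁻¹dg)^∧3)}_{α≺β} − 3{Tr(g⁻¹dg ∧ dg·g⁻¹)}_{α≺β≺γ}`
is closed for the total differential `d + δ`, componentwise:
its de Rham differential in Čech degree 1, the mixed component in Čech degree 2,
and the Čech differential of the degree-2 part all vanish.
-/

open TensorProduct

noncomputable section
namespace S16
set_option linter.unusedSectionVars false
set_option linter.unusedVariables false
variable {k : Type} [Field k] [CharZero k] {Ω : Type} [Ring Ω] [Algebra k Ω] {n : ℕ}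

lemma mapS_mul (sΩ : Ω →ₐ[k] Ω) (M N : Matrix (Fin n) (Fin n) Ω) :
    (M * N).map sΩ = M.map sΩ * N.map sΩ := by
  ext i j; simp [Matrix.map_apply, Matrix.mul_apply, map_sum]

lemma mapS_one (sΩ : Ω →ₐ[k] Ω) : (1 : Matrix (Fin n) (Fin n) Ω).map sΩ = 1 :=
  Matrix.map_one _ (map_zero sΩ) (map_one sΩ)

lemma mapD_mul (dΩ : Ω →ₗ[k] Ω) (sΩ : Ω →ₐ[k] Ω)
    (hLeib : ∀ a b : Ω, dΩ (a * b) = dΩ a * b + sΩ a * dΩ b)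
    (M N : Matrix (Fin n) (Fin n) Ω) :
    (M * N).map dΩ = M.map dΩ * N + M.map sΩ * N.map dΩ := by
  ext i j
  simp [Matrix.map_apply, Matrix.mul_apply, map_sum, hLeib, Finset.sum_add_distrib]

lemma trace_mapD (dΩ : Ω →ₗ[k] Ω) (M : Matrix (Fin n) (Fin n) Ω) :
    dΩ M.trace = (M.map dΩ).trace := by
  simp [Matrix.trace, Matrix.diag, map_sum, Matrix.map_apply]

lemma entry_of_eq {sΩ : Ω →ₐ[k] Ω} {M : Matrix (Fin n) (Fin n) Ω} (h : M.map sΩ = M)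
    (i j : Fin n) : sΩ (M i j) = M i j := by
  have := congrFun (congrFun h i) j
  simpa [Matrix.map_apply] using this

lemma entry_of_neg {sΩ : Ω →ₐ[k] Ω} {M : Matrix (Fin n) (Fin n) Ω} (h : M.map sΩ = -M)
    (i j : Fin n) : sΩ (M i j) = -(M i j) := by
  have := congrFun (congrFun h i) j
  simpa [Matrix.map_apply] using this

lemma trace_comm_even (sΩ : Ω →ₐ[k] Ω)
    (hcommEven : ∀ x y : Ω, sΩ x = x → x * y = y * x)
    (M N : Matrix (Fin n) (Fin n) Ω) (hM : M.map sΩ = M) :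
    (M * N).trace = (N * M).trace := by
  rw [Matrix.trace, Matrix.trace]
  simp only [Matrix.diag, Matrix.mul_apply]
  rw [Finset.sum_comm]
  exact Finset.sum_congr rfl fun j _ => Finset.sum_congr rfl fun i _ =>
    hcommEven _ _ (entry_of_eq hM i j)

lemma trace_comm_odd (sΩ : Ω →ₐ[k] Ω)
    (hcommOdd : ∀ x y : Ω, sΩ x = -x → sΩ y = -y → x * y = -(y * x))
    (M N : Matrix (Fin n) (Fin n) Ω) (hM : M.map sΩ = -M) (hN : N.map sΩ = -N) :
    (M * N).trace = -(N * M).trace := by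
  rw [Matrix.trace, Matrix.trace]
  simp only [Matrix.diag, Matrix.mul_apply]
  rw [Finset.sum_comm, ← Finset.sum_neg_distrib]
  refine Finset.sum_congr rfl fun j _ => ?_
  rw [← Finset.sum_neg_distrib]
  exact Finset.sum_congr rfl fun i _ =>
    hcommOdd _ _ (entry_of_neg hM i j) (entry_of_neg hN j i)

lemma dΩ_one (dΩ : Ω →ₗ[k] Ω) (sΩ : Ω →ₐ[k] Ω)
    (hLeib : ∀ a b : Ω, dΩ (a * b) = dΩ a * b + sΩ a * dΩ b) :
    dΩ (1 : Ω) = 0 := by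
  have := hLeib 1 1
  simp only [mul_one, one_mul, map_one] at this
  exact (add_eq_right.mp this.symm)

lemma mapD_one (dΩ : Ω →ₗ[k] Ω) (sΩ : Ω →ₐ[k] Ω)
    (hLeib : ∀ a b : Ω, dΩ (a * b) = dΩ a * b + sΩ a * dΩ b) :
    (1 : Matrix (Fin n) (Fin n) Ω).map dΩ = 0 := by
  ext i j
  by_cases hij : i = j <;>
    simp [Matrix.map_apply, Matrix.one_apply, hij, dΩ_one dΩ sΩ hLeib]

lemma mapD_mapD (dΩ : Ω →ₗ[k] Ω) (hdΩ : dΩ ∘ₗ dΩ = 0) (M : Matrix (Fin n) (Fin n) Ω) :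
    (M.map dΩ).map dΩ = 0 := by
  ext i j
  have := congrFun (congrArg DFunLike.coe hdΩ) (M i j)
  simpa [Matrix.map_apply] using this

lemma mapS_mapD (dΩ : Ω →ₗ[k] Ω) (sΩ : Ω →ₐ[k] Ω)
    (hsdΩ : sΩ.toLinearMap ∘ₗ dΩ = - (dΩ ∘ₗ sΩ.toLinearMap))
    (M : Matrix (Fin n) (Fin n) Ω) (hM : M.map sΩ = M) :
    (M.map dΩ).map sΩ = -(M.map dΩ) := by
  ext i j
  have h1 := congrFun (congrArg DFunLike.coe hsdΩ) (M i j)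
  simp only [LinearMap.comp_apply, LinearMap.neg_apply, AlgHom.toLinearMap_apply] at h1
  simp [Matrix.map_apply, h1, entry_of_eq hM i j]

section pair
variable (dΩ : Ω →ₗ[k] Ω) (sΩ : Ω →ₐ[k] Ω)

lemma sInv (h hI : Matrix (Fin n) (Fin n) Ω)
    (h1 : h * hI = 1) (h2 : hI * h = 1) (hev : h.map sΩ = h) : hI.map sΩ = hI := by
  calc hI.map sΩ = hI.map sΩ * (h * hI) := by rw [h1, mul_one]
    _ = (hI.map sΩ * h.map sΩ) * hI := by rw [hev, mul_assoc]
    _ = (hI * h).map sΩ * hI := by rw [mapS_mul]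
    _ = hI := by rw [h2, mapS_one, one_mul]

lemma mapD_inv (h hI : Matrix (Fin n) (Fin n) Ω)
    (h1 : h * hI = 1) (h2 : hI * h = 1) (hev : h.map sΩ = h)
    (hLeib : ∀ a b : Ω, dΩ (a * b) = dΩ a * b + sΩ a * dΩ b) :
    hI.map dΩ = -(hI * h.map dΩ * hI) := by
  have e : (hI * h).map dΩ = 0 := by rw [h2, mapD_one dΩ sΩ hLeib]
  rw [mapD_mul dΩ sΩ hLeib, sInv sΩ h hI h1 h2 hev] at e
  have e2 : (hI.map dΩ * h + hI * h.map dΩ) * hI = 0 * hI := by rw [e]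
  rw [add_mul, zero_mul, mul_assoc, mul_assoc, h1, mul_one] at e2
  have := eq_neg_of_add_eq_zero_left e2
  rw [this, mul_assoc]

lemma theta_odd (h hI : Matrix (Fin n) (Fin n) Ω)
    (h1 : h * hI = 1) (h2 : hI * h = 1) (hev : h.map sΩ = h)
    (hsdΩ : sΩ.toLinearMap ∘ₗ dΩ = - (dΩ ∘ₗ sΩ.toLinearMap)) :
    (hI * h.map dΩ).map sΩ = -(hI * h.map dΩ) := by
  rw [mapS_mul, sInv sΩ h hI h1 h2 hev, mapS_mapD dΩ sΩ hsdΩ h hev, mul_neg]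

lemma theta_d (h hI : Matrix (Fin n) (Fin n) Ω)
    (h1 : h * hI = 1) (h2 : hI * h = 1) (hev : h.map sΩ = h)
    (hLeib : ∀ a b : Ω, dΩ (a * b) = dΩ a * b + sΩ a * dΩ b)
    (hdΩ : dΩ ∘ₗ dΩ = 0) :
    (hI * h.map dΩ).map dΩ = -((hI * h.map dΩ) * (hI * h.map dΩ)) := by
  rw [mapD_mul dΩ sΩ hLeib, mapD_mapD dΩ hdΩ, mul_zero, add_zero,
    mapD_inv dΩ sΩ h hI h1 h2 hev hLeib]
  rw [neg_mul, mul_assoc, mul_assoc]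

end pair
lemma part1 (dΩ : Ω →ₗ[k] Ω) (sΩ : Ω →ₐ[k] Ω)
    (hdΩ : dΩ ∘ₗ dΩ = 0)
    (hsdΩ : sΩ.toLinearMap ∘ₗ dΩ = - (dΩ ∘ₗ sΩ.toLinearMap))
    (hLeib : ∀ a b : Ω, dΩ (a * b) = dΩ a * b + sΩ a * dΩ b)
    (hcommOdd : ∀ x y : Ω, sΩ x = -x → sΩ y = -y → x * y = -(y * x))
    (h hI : Matrix (Fin n) (Fin n) Ω)
    (h1 : h * hI = 1) (h2 : hI * h = 1) (hev : h.map sΩ = h) :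
    dΩ (((hI * h.map dΩ) * (hI * h.map dΩ) * (hI * h.map dΩ)).trace) = 0 := by
  set θ := hI * h.map dΩ with hθ
  have hodd : θ.map sΩ = -θ := theta_odd dΩ sΩ h hI h1 h2 hev hsdΩ
  have hdθ : θ.map dΩ = -(θ*θ) := theta_d dΩ sΩ h hI h1 h2 hev hLeib hdΩ
  have dθ2 : (θ*θ).map dΩ = 0 := by
    rw [mapD_mul dΩ sΩ hLeib, hdθ, hodd]
    simp [mul_assoc]
  have odd3 : (θ*θ*θ).map sΩ = -(θ*θ*θ) := by
    rw [mapS_mul, mapS_mul, hodd]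
    simp [mul_assoc]
  have dθ3 : (θ*θ*θ).map dΩ = -((θ*θ)*(θ*θ)) := by
    rw [mapD_mul dΩ sΩ hLeib (θ*θ) θ, dθ2, zero_mul, zero_add, mapS_mul, hodd, hdθ]
    simp [mul_assoc]
  have tr4 : (θ*(θ*θ*θ)).trace = -((θ*θ*θ)*θ).trace :=
    trace_comm_odd sΩ hcommOdd θ (θ*θ*θ) hodd odd3
  have e1 : θ*(θ*θ*θ) = (θ*θ)*(θ*θ) := by simp only [mul_assoc]
  have e2 : (θ*θ*θ)*θ = (θ*θ)*(θ*θ) := by simp only [mul_assoc]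
  rw [e1, e2] at tr4
  set x := ((θ*θ)*(θ*θ)).trace with hx
  have hxx : x + x = 0 := by
    nth_rewrite 1 [tr4]; simp
  have h2x : (2:k) • x = 0 := by rw [two_smul]; exact hxx
  have hx0 : x = 0 := by
    have := congrArg (fun y => (2:k)⁻¹ • y) h2x
    simpa [smul_smul, inv_mul_cancel₀ (by norm_num : (2:k) ≠ 0)] using this
  rw [trace_mapD, dθ3]
  simp [← hx, hx0]

lemma part3 (dΩ : Ω →ₗ[k] Ω) (sΩ : Ω →ₐ[k] Ω)
    (hLeib : ∀ a b : Ω, dΩ (a * b) = dΩ a * b + sΩ a * dΩ b)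
    (hcommEven : ∀ x y : Ω, sΩ x = x → x * y = y * x)
    (h₁ hI₁ h₂ hI₂ h₃ hI₃ : Matrix (Fin n) (Fin n) Ω)
    (h11 : h₁ * hI₁ = 1) (h12 : hI₁ * h₁ = 1) (hev₁ : h₁.map sΩ = h₁)
    (h21 : h₂ * hI₂ = 1) (h22 : hI₂ * h₂ = 1) (hev₂ : h₂.map sΩ = h₂)
    (h31 : h₃ * hI₃ = 1) (h32 : hI₃ * h₃ = 1) (hev₃ : h₃.map sΩ = h₃) :
    ((hI₂ * h₂.map dΩ) * (h₃.map dΩ * hI₃)).trace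
      - ((hI₂ * hI₁) * (h₁ * h₂).map dΩ * (h₃.map dΩ * hI₃)).trace
      + ((hI₁ * h₁.map dΩ) * ((h₂ * h₃).map dΩ * (hI₃ * hI₂))).trace
      - ((hI₁ * h₁.map dΩ) * (h₂.map dΩ * hI₂)).trace = 0 := by
  have hIev₂ : hI₂.map sΩ = hI₂ := sInv sΩ h₂ hI₂ h21 h22 hev₂
  have canc₂ : ∀ X : Matrix (Fin n) (Fin n) Ω, hI₂ * (h₂ * X) = X := fun X => by
    rw [← mul_assoc, h22, one_mul]
  have canc₂' : ∀ X : Matrix (Fin n) (Fin n) Ω, h₂ * (hI₂ * X) = X := fun X => by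
    rw [← mul_assoc, h21, one_mul]
  have canc₃' : ∀ X : Matrix (Fin n) (Fin n) Ω, h₃ * (hI₃ * X) = X := fun X => by
    rw [← mul_assoc, h31, one_mul]
  set θ₁ := hI₁ * h₁.map dΩ with hθ₁
  set θ₂ := hI₂ * h₂.map dΩ with hθ₂
  set ω₃ := h₃.map dΩ * hI₃ with hω₃
  -- decompose the (α,γ) term
  have canc₁ : ∀ X : Matrix (Fin n) (Fin n) Ω, hI₁ * (h₁ * X) = X := fun X => by
    rw [← mul_assoc, h12, one_mul]
  have E1 : (hI₂ * hI₁) * (h₁ * h₂).map dΩ = hI₂ * (θ₁ * h₂) + θ₂ := by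
    rw [mapD_mul dΩ sΩ hLeib, hev₁, mul_add, hθ₁, hθ₂]
    simp only [mul_assoc, canc₁]
  -- decompose the (β,δ') term
  have E2 : (h₂ * h₃).map dΩ * (hI₃ * hI₂) = h₂.map dΩ * hI₂ + h₂ * (ω₃ * hI₂) := by
    rw [mapD_mul dΩ sΩ hLeib, hev₂, add_mul, hω₃]
    simp only [mul_assoc, canc₃']
  -- the two cross terms agree by cyclicity of the trace
  have E3 : ((hI₂ * (θ₁ * h₂)) * ω₃).trace = (θ₁ * (h₂ * (ω₃ * hI₂))).trace := by
    have e : (hI₂ * (θ₁ * h₂)) * ω₃ = hI₂ * ((θ₁ * (h₂ * ω₃))) := by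
      simp only [mul_assoc]
    rw [e, trace_comm_even sΩ hcommEven hI₂ _ hIev₂]
    simp only [mul_assoc]
  rw [E1, E2, add_mul, mul_add, Matrix.trace_add, Matrix.trace_add, E3]
  abel

lemma part2 (dΩ : Ω →ₗ[k] Ω) (sΩ : Ω →ₐ[k] Ω)
    (hdΩ : dΩ ∘ₗ dΩ = 0)
    (hsdΩ : sΩ.toLinearMap ∘ₗ dΩ = - (dΩ ∘ₗ sΩ.toLinearMap))
    (hLeib : ∀ a b : Ω, dΩ (a * b) = dΩ a * b + sΩ a * dΩ b)
    (hcommEven : ∀ x y : Ω, sΩ x = x → x * y = y * x)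
    (h₁ hI₁ h₂ hI₂ : Matrix (Fin n) (Fin n) Ω)
    (h11 : h₁ * hI₁ = 1) (h12 : hI₁ * h₁ = 1) (hev₁ : h₁.map sΩ = h₁)
    (h21 : h₂ * hI₂ = 1) (h22 : hI₂ * h₂ = 1) (hev₂ : h₂.map sΩ = h₂) :
    (((hI₂ * h₂.map dΩ) * (hI₂ * h₂.map dΩ) * (hI₂ * h₂.map dΩ)).trace
      - ((hI₂ * hI₁) * (h₁ * h₂).map dΩ * ((hI₂ * hI₁) * (h₁ * h₂).map dΩ)
          * ((hI₂ * hI₁) * (h₁ * h₂).map dΩ)).trace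
      + ((hI₁ * h₁.map dΩ) * (hI₁ * h₁.map dΩ) * (hI₁ * h₁.map dΩ)).trace)
      - (3 : k) • dΩ (((hI₁ * h₁.map dΩ) * (h₂.map dΩ * hI₂)).trace) = 0 := by
  have hIev₂ : hI₂.map sΩ = hI₂ := sInv sΩ h₂ hI₂ h21 h22 hev₂
  have canc₁ : ∀ X : Matrix (Fin n) (Fin n) Ω, hI₁ * (h₁ * X) = X := fun X => by
    rw [← mul_assoc, h12, one_mul]
  have canc₂ : ∀ X : Matrix (Fin n) (Fin n) Ω, hI₂ * (h₂ * X) = X := fun X => by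
    rw [← mul_assoc, h22, one_mul]
  have canc₂' : ∀ X : Matrix (Fin n) (Fin n) Ω, h₂ * (hI₂ * X) = X := fun X => by
    rw [← mul_assoc, h21, one_mul]
  set θ := hI₁ * h₁.map dΩ with hθ
  set v := hI₂ * h₂.map dΩ with hv
  set u := hI₂ * θ * h₂ with hu
  have θodd : θ.map sΩ = -θ := theta_odd dΩ sΩ h₁ hI₁ h11 h12 hev₁ hsdΩ
  have vodd : v.map sΩ = -v := theta_odd dΩ sΩ h₂ hI₂ h21 h22 hev₂ hsdΩ
  have θd : θ.map dΩ = -(θ*θ) := theta_d dΩ sΩ h₁ hI₁ h11 h12 hev₁ hLeib hdΩ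
  have vd : v.map dΩ = -(v*v) := theta_d dΩ sΩ h₂ hI₂ h21 h22 hev₂ hLeib hdΩ
  have uodd : u.map sΩ = -u := by
    rw [hu, mapS_mul, mapS_mul, hIev₂, θodd, hev₂]
    simp [mul_assoc]
  -- w = u + v
  have E1 : (hI₂ * hI₁) * (h₁ * h₂).map dΩ = u + v := by
    rw [mapD_mul dΩ sΩ hLeib, hev₁, mul_add, hu, hv, hθ]
    simp only [mul_assoc, canc₁]
  -- evenness of pairwise products
  have uv_ev : (u*v).map sΩ = u*v := by rw [mapS_mul, uodd, vodd]; simp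
  have vu_ev : (v*u).map sΩ = v*u := by rw [mapS_mul, uodd, vodd]; simp
  have uu_ev : (u*u).map sΩ = u*u := by rw [mapS_mul, uodd]; simp
  have vv_ev : (v*v).map sΩ = v*v := by rw [mapS_mul, vodd]; simp
  -- canonical forms of trace monomials
  set T1 := (u*(u*v)).trace with hT1
  set T2 := (u*(v*v)).trace with hT2
  have hA : ((u*u)*v).trace = T1 := by rw [mul_assoc]
  have hB : ((u*v)*u).trace = T1 := trace_comm_even sΩ hcommEven (u*v) u uv_ev
  have hC : ((v*u)*u).trace = T1 := by
    rw [mul_assoc, ← trace_comm_even sΩ hcommEven (u*u) v uu_ev, mul_assoc]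
  have hD : ((u*v)*v).trace = T2 := by rw [mul_assoc]
  have hE : ((v*v)*u).trace = T2 := trace_comm_even sΩ hcommEven (v*v) u vv_ev
  have hF : ((v*u)*v).trace = T2 := by
    rw [trace_comm_even sΩ hcommEven (v*u) v vu_ev, ← mul_assoc, hE]
  -- trace of θ³ is the trace of u³
  have θ3 : (θ*θ*θ).trace = (u*u*u).trace := by
    have e : u*u*u = hI₂ * (θ*(θ*(θ*h₂))) := by
      rw [hu]; simp only [mul_assoc, canc₂']
    rw [e, trace_comm_even sΩ hcommEven hI₂ _ hIev₂]
    simp only [mul_assoc]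
    rw [h21, mul_one]
  -- b = Tr(u v)
  have hb : (θ * (h₂.map dΩ * hI₂)).trace = (u*v).trace := by
    have e : u * v = hI₂ * (θ * h₂.map dΩ) := by
      rw [hu, hv]; simp only [mul_assoc, canc₂']
    rw [e, trace_comm_even sΩ hcommEven hI₂ _ hIev₂]
    simp only [mul_assoc]
  -- differential of u
  have ud : u.map dΩ = -(v*u) - u*u - u*v := by
    rw [hu, mapD_mul dΩ sΩ hLeib, mapD_mul dΩ sΩ hLeib, mapS_mul, hIev₂, θodd, θd,
      mapD_inv dΩ sΩ h₂ hI₂ h21 h22 hev₂ hLeib, ← hv]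
    rw [hv, hθ] at *
    simp only [sub_eq_add_neg, neg_mul, mul_neg, add_mul, mul_add, neg_neg, neg_add,
      mul_assoc, canc₂', canc₂]
  -- differential of b
  have db : dΩ ((u*v).trace) = -T1 - T2 := by
    rw [trace_mapD, mapD_mul dΩ sΩ hLeib, uodd, ud, vd, Matrix.trace_add]
    have e1 : (-(v*u) - u*u - u*v) * v = -((v*u)*v) - (u*u)*v - (u*v)*v := by
      simp only [sub_eq_add_neg, neg_mul, add_mul]
    have e2 : (-u) * -(v*v) = u*(v*v) := by simp
    rw [e1, e2]
    simp only [sub_eq_add_neg, Matrix.trace_add, Matrix.trace_neg]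
    rw [hA, hD, hF, ← hT2]
    abel
  -- assemble
  rw [E1, hb, db, θ3]
  have expand : (u+v)*(u+v)*(u+v)
      = u*u*u + ((u*u)*v + ((u*v)*u + ((v*u)*u + ((u*v)*v + ((v*u)*v + ((v*v)*u + v*v*v)))))) := by
    simp only [mul_add, add_mul]
    abel
  rw [expand]
  simp only [Matrix.trace_add]
  rw [hA, hB, hC, hD, hE, hF]
  rw [show (3:k) = 1+1+1 by norm_num, add_smul, add_smul, one_smul]
  simp only [smul_sub, smul_neg, sub_eq_add_neg, neg_add, neg_neg]
  abel

lemma inv_uniq {A B C : Matrix (Fin n) (Fin n) Ω} (hAB : A * B = 1) (hCA : C * A = 1) :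
    B = C := by
  calc B = 1 * B := (one_mul _).symm
    _ = (C * A) * B := by rw [hCA]
    _ = C * (A * B) := by rw [mul_assoc]
    _ = C := by rw [hAB, mul_one]

end S16

theorem statement16
    (k : Type) [Field k] [CharZero k]
    (ι : Type) [LinearOrder ι]
    (Ω : Type) [Ring Ω] [Algebra k Ω]
    (dΩ : Ω →ₗ[k] Ω) (sΩ : Ω →ₐ[k] Ω)
    (hdΩ : dΩ ∘ₗ dΩ = 0)
    (hsΩ : (sΩ.toLinearMap) ∘ₗ (sΩ.toLinearMap) = LinearMap.id)
    (hsdΩ : sΩ.toLinearMap ∘ₗ dΩ = - (dΩ ∘ₗ sΩ.toLinearMap))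
    (hLeib : ∀ a b : Ω, dΩ (a * b) = dΩ a * b + sΩ a * dΩ b)
    (hcommEven : ∀ x y : Ω, sΩ x = x → x * y = y * x)
    (hcommOdd : ∀ x y : Ω, sΩ x = -x → sΩ y = -y → x * y = -(y * x))
    (n : ℕ)
    (g gInv : ι → ι → Matrix (Fin n) (Fin n) Ω)
    -- the entries of g are functions (degree 0 forms)
    (hgdeg : ∀ α β i j, sΩ (g α β i j) = g α β i j)
    (hginv₁ : ∀ α β, α < β → g α β * gInv α β = 1)
    (hginv₂ : ∀ α β, α < β → gInv α β * g α β = 1)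
    -- the cocycle condition g_{αγ} = g_{αβ}·g_{βγ}
    (hcocycle : ∀ α β γ, α < β → β < γ → g α γ = g α β * g β γ) :
    -- with a_{αβ} = Tr((g⁻¹dg)³) and b_{αβγ} = Tr(g⁻¹dg ∧ dg·g⁻¹):
    (letI a : ι → ι → Ω := fun α β =>
      ((gInv α β * (g α β).map dΩ) * (gInv α β * (g α β).map dΩ)
        * (gInv α β * (g α β).map dΩ)).trace
     letI b : ι → ι → ι → Ω := fun α β γ =>
      ((gInv α β * (g α β).map dΩ) * ((g β γ).map dΩ * gInv β γ)).trace
     -- (d + δ)(a − 3b) = 0, componentwise: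
     (∀ α β, α < β → dΩ (a α β) = 0)
     ∧
     (∀ α β γ, α < β → β < γ →
        (a β γ - a α γ + a α β) - (3 : k) • dΩ (b α β γ) = 0)
     ∧
     (∀ α β γ δ', α < β → β < γ → γ < δ' →
        b β γ δ' - b α γ δ' + b α β δ' - b α β γ = 0)) := by
  have hev : ∀ α β, (g α β).map sΩ = g α β := fun α β => by
    ext i j; exact hgdeg α β i j
  have hInvProd : ∀ α β γ, α < β → β < γ → gInv α γ = gInv β γ * gInv α β := by
    intro α β γ hab hbg
    have hag : α < γ := hab.trans hbg
    have hCA : (gInv β γ * gInv α β) * g α γ = 1 := by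
      rw [hcocycle α β γ hab hbg, mul_assoc, ← mul_assoc (gInv α β), hginv₂ α β hab,
        one_mul, hginv₂ β γ hbg]
    exact S16.inv_uniq (hginv₁ α γ hag) hCA
  refine ⟨?_, ?_, ?_⟩
  · intro α β hab
    exact S16.part1 dΩ sΩ hdΩ hsdΩ hLeib hcommOdd (g α β) (gInv α β)
      (hginv₁ α β hab) (hginv₂ α β hab) (hev α β)
  · intro α β γ hab hbg
    beta_reduce
    rw [hcocycle α β γ hab hbg, hInvProd α β γ hab hbg]
    exact S16.part2 dΩ sΩ hdΩ hsdΩ hLeib hcommEven (g α β) (gInv α β) (g β γ) (gInv β γ)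
      (hginv₁ α β hab) (hginv₂ α β hab) (hev α β)
      (hginv₁ β γ hbg) (hginv₂ β γ hbg) (hev β γ)
  · intro α β γ δ' hab hbg hgd
    beta_reduce
    rw [hcocycle α β γ hab hbg, hInvProd α β γ hab hbg,
      hcocycle β γ δ' hbg hgd, hInvProd β γ δ' hbg hgd]
    exact S16.part3 dΩ sΩ hLeib hcommEven
      (g α β) (gInv α β) (g β γ) (gInv β γ) (g γ δ') (gInv γ δ')
      (hginv₁ α β hab) (hginv₂ α β hab) (hev α β)
      (hginv₁ β γ hbg) (hginv₂ β γ hbg) (hev β γ)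
      (hginv₁ γ δ' hgd) (hginv₂ γ δ' hgd) (hev γ δ')

end
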